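/- Let μ ∈ ℝ, σ > 0, q > 0 and let μ_q : (0,∞) → ℝ be the logarithmic derivative of the scale function ω(x) = e^{r₊x} - e^{r₋x}, where r₊ > 0 > r₋ solve (σ²/2)r² + μr - q = 0. Then the function G(Δ) = μ_q(Δ)² + (2μ/σ²)μ_q(Δ) - 2q/σ² is strictly decreasing on (0,∞), tends to +∞ as Δ → 0⁺, and is nonnegative on (0,∞). -/

import Mathlib

open Real Set Filter

lemma structure_eq_key_alg (a b E B : ℝ) (hB : B ≠ 0) (hE : 0 < E) (hE1 : E ≠ 1) :
    ((a * (E ^ 2 * B) - b * B) / (E ^ 2 * B - B)) ^ 2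
      + (-(a + b)) * ((a * (E ^ 2 * B) - b * B) / (E ^ 2 * B - B)) - -(a * b)
      = (a - b) ^ 2 / (E - E⁻¹) ^ 2 := by
  have hE0 : E ≠ 0 := ne_of_gt hE
  have hE2 : E ^ 2 - 1 ≠ 0 := by
    intro hcon
    have h1 : E ^ 2 = 1 := by linarith
    have : E = 1 := by nlinarith
    exact hE1 this
  have hden1 : E ^ 2 * B - B ≠ 0 := by
    intro hcon
    have h1 : (E ^ 2 - 1) * B = 0 := by linarith [hcon, (by ring : (E ^ 2 - 1) * B = E ^ 2 * B - B)]
    rcases mul_eq_zero.mp h1 with h | h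
    · exact hE2 h
    · exact hB h
  have hden2 : E - E⁻¹ ≠ 0 := by
    intro hcon
    apply hE2
    have h1 : (E - E⁻¹) * E = E ^ 2 - 1 := by field_simp
    rw [hcon, zero_mul] at h1
    linarith
  have hF : (a * (E ^ 2 * B) - b * B) / (E ^ 2 * B - B) = (a * E ^ 2 - b) / (E ^ 2 - 1) := by
    rw [div_eq_div_iff hden1 hE2]
    ring
  have hRHS : (a - b) ^ 2 / (E - E⁻¹) ^ 2 = (a - b) ^ 2 * E ^ 2 / (E ^ 2 - 1) ^ 2 := by
    rw [div_eq_div_iff (pow_ne_zero 2 hden2) (pow_ne_zero 2 hE2)]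
    field_simp
  rw [hF, hRHS]
  field_simp
  ring

/-- The left-hand side G(Δ) = μ_q(Δ)² + (2μ/σ²)μ_q(Δ) - 2q/σ² of the structure
equation is strictly decreasing, blows up at 0⁺, and is nonnegative on (0,∞). -/
theorem structure_equation_lhs_monotone
    (μ σ q rp rm : ℝ) (hσ : 0 < σ) (hq : 0 < q)
    (hrp : 0 < rp) (hrm : rm < 0)
    (hrootp : σ ^ 2 / 2 * rp ^ 2 + μ * rp - q = 0)
    (hrootm : σ ^ 2 / 2 * rm ^ 2 + μ * rm - q = 0)
    (ω μq G : ℝ → ℝ)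
    (hω : ∀ x, ω x = Real.exp (rp * x) - Real.exp (rm * x))
    (hμq : ∀ x, 0 < x → μq x = deriv ω x / ω x)
    (hG : ∀ Δ, G Δ = (μq Δ) ^ 2 + (2 * μ / σ ^ 2) * μq Δ - 2 * q / σ ^ 2) :
    StrictAntiOn G (Set.Ioi 0) ∧
      Tendsto G (nhdsWithin 0 (Set.Ioi 0)) atTop ∧
      ∀ Δ, 0 < Δ → 0 ≤ G Δ := by
  have hσ2 : (0:ℝ) < σ ^ 2 := by positivity
  have hab : rp - rm ≠ 0 := by intro h; nlinarith
  -- Vieta relations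
  have hkey : (rp - rm) * (σ ^ 2 / 2 * (rp + rm) + μ) = 0 := by
    linear_combination hrootp - hrootm
  have hD : σ ^ 2 / 2 * (rp + rm) + μ = 0 := by
    rcases mul_eq_zero.mp hkey with h | h
    · exact absurd h hab
    · exact h
  have hsum : 2 * μ / σ ^ 2 = -(rp + rm) := by
    field_simp
    linarith
  have hprod : 2 * q / σ ^ 2 = -(rp * rm) := by
    field_simp
    nlinarith [hrootp, hD]
  -- derivative of ω
  have hωfun : ω = fun x => Real.exp (rp * x) - Real.exp (rm * x) := funext hω
  have hderiv : ∀ x : ℝ, deriv ω x = rp * Real.exp (rp * x) - rm * Real.exp (rm * x) := by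
    intro x
    rw [hωfun]
    have h1 : HasDerivAt (fun x : ℝ => Real.exp (rp * x)) (Real.exp (rp * x) * (rp * 1)) x :=
      ((hasDerivAt_id x).const_mul rp).exp
    have h2 : HasDerivAt (fun x : ℝ => Real.exp (rm * x)) (Real.exp (rm * x) * (rm * 1)) x :=
      ((hasDerivAt_id x).const_mul rm).exp
    rw [(by have h3 : HasDerivAt (fun x : ℝ => Real.exp (rp * x) - Real.exp (rm * x)) _ x := h1.sub h2; exact h3.deriv : deriv (fun x : ℝ => Real.exp (rp * x) - Real.exp (rm * x)) x = _)]
    ring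
  have hωpos : ∀ x : ℝ, 0 < x → 0 < ω x := by
    intro x hx
    rw [hω]
    have : rm * x < rp * x := by nlinarith
    exact sub_pos.mpr (Real.exp_lt_exp.mpr this)
  -- the hyperbolic-sine-type function
  have hc : 0 < (rp - rm) / 2 := by linarith
  have hhpos : ∀ x : ℝ, 0 < x →
      0 < Real.exp ((rp - rm) / 2 * x) - Real.exp (-((rp - rm) / 2 * x)) := by
    intro x hx
    have : -((rp - rm) / 2 * x) < (rp - rm) / 2 * x := by nlinarith
    exact sub_pos.mpr (Real.exp_lt_exp.mpr this)
  have hhmono : ∀ x y : ℝ, x < y →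
      Real.exp ((rp - rm) / 2 * x) - Real.exp (-((rp - rm) / 2 * x)) <
        Real.exp ((rp - rm) / 2 * y) - Real.exp (-((rp - rm) / 2 * y)) := by
    intro x y hxy
    have h1 : Real.exp ((rp - rm) / 2 * x) < Real.exp ((rp - rm) / 2 * y) :=
      Real.exp_lt_exp.mpr (by nlinarith)
    have h2 : Real.exp (-((rp - rm) / 2 * y)) < Real.exp (-((rp - rm) / 2 * x)) :=
      Real.exp_lt_exp.mpr (by nlinarith)
    linarith
  -- key identity
  have hGkey : ∀ x : ℝ, 0 < x → G x = (rp - rm) ^ 2 /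
      (Real.exp ((rp - rm) / 2 * x) - Real.exp (-((rp - rm) / 2 * x))) ^ 2 := by
    intro x hx
    have hB : Real.exp (rm * x) ≠ 0 := ne_of_gt (Real.exp_pos _)
    have hE : (0:ℝ) < Real.exp ((rp - rm) / 2 * x) := Real.exp_pos _
    have hE1 : Real.exp ((rp - rm) / 2 * x) ≠ 1 := by
      have hpos : (0:ℝ) < (rp - rm) / 2 * x := by positivity
      exact ne_of_gt (Real.one_lt_exp_iff.mpr hpos)
    have hEinv : Real.exp (-((rp - rm) / 2 * x)) = (Real.exp ((rp - rm) / 2 * x))⁻¹ :=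
      Real.exp_neg _
    have hA_eq : Real.exp (rp * x) =
        (Real.exp ((rp - rm) / 2 * x)) ^ 2 * Real.exp (rm * x) := by
      rw [sq, ← Real.exp_add, ← Real.exp_add]
      congr 1
      ring
    rw [hG, hμq x hx, hderiv, hω, hsum, hprod, hEinv, hA_eq]
    exact structure_eq_key_alg rp rm _ _ hB hE hE1
  refine ⟨?_, ?_, ?_⟩
  · intro x hx y hy hxy
    rw [hGkey x hx, hGkey y hy]
    have h1 := hhpos x hx
    have h2 := hhmono x y hxy
    have hsq : (Real.exp ((rp - rm) / 2 * x) - Real.exp (-((rp - rm) / 2 * x))) ^ 2 <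
        (Real.exp ((rp - rm) / 2 * y) - Real.exp (-((rp - rm) / 2 * y))) ^ 2 := by nlinarith
    have hnum : (0:ℝ) < (rp - rm) ^ 2 := by positivity
    exact div_lt_div_of_pos_left hnum (by nlinarith) hsq
  · have hcontfun : Continuous fun x : ℝ =>
        (Real.exp ((rp - rm) / 2 * x) - Real.exp (-((rp - rm) / 2 * x))) ^ 2 := by
      apply Continuous.pow
      exact (Real.continuous_exp.comp (continuous_const.mul continuous_id)).sub
        (Real.continuous_exp.comp ((continuous_const.mul continuous_id).neg))
    have hcont : Tendsto (fun x : ℝ =>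
        (Real.exp ((rp - rm) / 2 * x) - Real.exp (-((rp - rm) / 2 * x))) ^ 2)
        (nhdsWithin 0 (Set.Ioi 0)) (nhds 0) := by
      have h0 : (Real.exp ((rp - rm) / 2 * 0) - Real.exp (-((rp - rm) / 2 * 0))) ^ 2 = 0 := by
        simp
      have := (hcontfun.tendsto 0).mono_left (nhdsWithin_le_nhds (s := Set.Ioi (0:ℝ)))
      rwa [h0] at this
    have hpos : ∀ᶠ x in nhdsWithin (0:ℝ) (Set.Ioi 0),
        0 < (Real.exp ((rp - rm) / 2 * x) - Real.exp (-((rp - rm) / 2 * x))) ^ 2 := by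
      filter_upwards [self_mem_nhdsWithin] with x hx
      exact pow_pos (hhpos x hx) 2
    have htend : Tendsto (fun x : ℝ =>
        (Real.exp ((rp - rm) / 2 * x) - Real.exp (-((rp - rm) / 2 * x))) ^ 2)
        (nhdsWithin 0 (Set.Ioi 0)) (nhdsWithin 0 (Set.Ioi 0)) :=
      tendsto_nhdsWithin_iff.mpr ⟨hcont, hpos⟩
    have hinv : Tendsto (fun x : ℝ =>
        ((Real.exp ((rp - rm) / 2 * x) - Real.exp (-((rp - rm) / 2 * x))) ^ 2)⁻¹)
        (nhdsWithin 0 (Set.Ioi 0)) atTop := htend.inv_tendsto_nhdsGT_zero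
    have hnum : (0:ℝ) < (rp - rm) ^ 2 := by positivity
    have hmul : Tendsto (fun x : ℝ => (rp - rm) ^ 2 *
        ((Real.exp ((rp - rm) / 2 * x) - Real.exp (-((rp - rm) / 2 * x))) ^ 2)⁻¹)
        (nhdsWithin 0 (Set.Ioi 0)) atTop := hinv.const_mul_atTop hnum
    refine hmul.congr' ?_
    filter_upwards [self_mem_nhdsWithin] with x hx
    rw [hGkey x hx]
    ring
  · intro Δ hΔ
    rw [hGkey Δ hΔ]
    positivity
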